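/- If A generates a strongly continuous one-parameter group of operators e^{tA} in a Banach space E with ‖e^{tA}f‖ = ‖f‖ for all f and t, then for every integer n ≥ 2 there exists a constant C(n) such that for all ε > 0, all integers 1 ≤ m ≤ n−1, and all f in the domain of A^n, the interpolation inequality ‖A^m f‖ ≤ ε^{n−m} ‖A^n f‖ + ε^{−m} C(n) ‖f‖ holds. -/

import Mathlib

/-!
Statement 3 (Lemma 2.2): if `A` generates a strongly continuous one-parameter group of
isometries `e^{tA}` of a Banach space `E`, then for every `n ≥ 2` there is a constant `C(n)`
such that for all `ε > 0`, all `1 ≤ m ≤ n − 1` and all `f` in the domain of `A^n`,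
`‖A^m f‖ ≤ ε^{n−m} ‖A^n f‖ + ε^{−m} C(n) ‖f‖`.
-/

open Filter Topology

variable {E : Type*} [NormedAddCommGroup E] [NormedSpace ℝ E] [CompleteSpace E]

/-- `InGraph A f g` means `f` is in the domain of the (partially defined) operator `A`
and `A f = g`. -/
def InGraph (A : E →ₗ.[ℝ] E) (f g : E) : Prop :=
  ∃ hf : f ∈ A.domain, A ⟨f, hf⟩ = g

/-- `PowGraph A n f g` means `f` is in the domain of `A^n` and `A^n f = g`. -/
def PowGraph (A : E →ₗ.[ℝ] E) : ℕ → E → E → Prop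
  | 0 => fun f g => g = f
  | n + 1 => fun f g => ∃ h : E, InGraph A f h ∧ PowGraph A n h g

/-- The hypotheses: `U` is a strongly continuous one-parameter group of surjective linear
isometries of `E`, and `A` is its infinitesimal generator
`A f = lim_{t → 0} (U t f - f)/t` (with domain the set of `f` for which the limit exists). -/
structure IsometryGroupGenerator (U : ℝ → E →L[ℝ] E) (A : E →ₗ.[ℝ] E) : Prop where
  map_zero : U 0 = ContinuousLinearMap.id ℝ E
  map_add : ∀ s t : ℝ, U (s + t) = (U s).comp (U t)
  isometry : ∀ (t : ℝ) (f : E), ‖U t f‖ = ‖f‖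
  surjective : ∀ t : ℝ, Function.Surjective (U t)
  strongly_continuous : ∀ f : E, Continuous fun t : ℝ => U t f
  generator_domain : ∀ f : E, f ∈ A.domain ↔
    ∃ g : E, Tendsto (fun t : ℝ => t⁻¹ • (U t f - f)) (𝓝[≠] (0 : ℝ)) (𝓝 g)
  generator_spec : ∀ (f : E) (hf : f ∈ A.domain),
    Tendsto (fun t : ℝ => t⁻¹ • (U t f - f)) (𝓝[≠] (0 : ℝ)) (𝓝 (A ⟨f, hf⟩))


set_option linter.unusedSectionVars false

lemma aux_zero {x y : ℝ} (hx : 0 ≤ x) (hy : 0 ≤ y) (h : ∀ t : ℝ, 0 < t → x ≤ 2 / t * y) :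
    x = 0 := by
  by_contra hne
  have hxpos : 0 < x := lt_of_le_of_ne hx (Ne.symm hne)
  have ht : (0:ℝ) < (4 * y + 1) / x := by positivity
  have := h _ ht
  rw [div_div_eq_mul_div, div_mul_eq_mul_div, le_div_iff₀ (by positivity)] at this
  nlinarith

lemma lemmaR (n : ℕ) (hn : 2 ≤ n) (a : ℕ → ℝ) (ha : ∀ k, 0 ≤ a k)
    (hrec : ∀ k, 1 ≤ k → k + 1 ≤ n → ∀ t : ℝ, 0 < t →
      a k ≤ t * a (k + 1) + 2 / t * a (k - 1))
    (hzero : ∀ k, k < n → a k = 0 → a (k + 1) = 0) :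
    ∀ ε : ℝ, 0 < ε → ∀ m, 1 ≤ m → m + 1 ≤ n →
      a m ≤ ε ^ (n - m) * a n + ε ^ (-(m : ℤ)) * (8 : ℝ) ^ (n ^ 4) * a 0 := by
  intro ε hε m hm1 hmn
  by_cases hposall : ∀ k, k ≤ n → 0 < a k
  · -- main case
    set r : ℕ → ℝ := fun k => a (k + 1) / a k with hr_def
    have hrpos : ∀ k, k + 1 ≤ n → 0 < r k := fun k hk =>
      div_pos (hposall _ hk) (hposall _ (by omega))
    have hstep : ∀ k, k + 2 ≤ n → r k ≤ 8 * r (k + 1) := by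
      intro k hk
      have p0 := hposall k (by omega)
      have p1 := hposall (k+1) (by omega)
      have p2 := hposall (k+2) (by omega)
      have h1 := hrec (k + 1) (by omega) (by omega) (a (k+1) / (2 * a (k+2)))
        (div_pos p1 (by linarith))
      rw [show k+1+1 = k+2 from rfl, Nat.add_sub_cancel] at h1
      have hne0 := p0.ne'
      have hne1 := p1.ne'
      have hne2 := p2.ne'
      have e : a (k+1) / (2 * a (k+2)) * a (k+2) = a (k+1) / 2 := by field_simp
      have e2 : 2 / (a (k+1) / (2 * a (k+2))) * a k = 4 * a (k+2) * a k / a (k+1) := by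
        rw [div_div_eq_mul_div, div_mul_eq_mul_div]
        congr 1; ring
      rw [e, e2] at h1
      have h2 : a (k+1) - a (k+1) / 2 ≤ 4 * a (k+2) * a k / a (k+1) := by linarith
      rw [le_div_iff₀ p1] at h2
      have hsq : a (k+1) ^ 2 ≤ 8 * a (k+2) * a k := by nlinarith
      show a (k+1) / a k ≤ 8 * (a (k+2) / a (k+1))
      rw [mul_div_assoc', div_le_div_iff₀ p0 p1]
      nlinarith
    have hchain : ∀ i j, i ≤ j → j + 1 ≤ n → r i ≤ 8 ^ (j - i) * r j := by
      intro i j hij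
      induction j, hij using Nat.le_induction with
      | base => intro _; simp
      | succ j hij IH =>
        intro hj1
        have h1 := IH (by omega)
        have h2 := hstep j (by omega)
        have h3 : (8:ℝ) ^ (j - i) * r j ≤ 8 ^ (j - i) * (8 * r (j+1)) :=
          mul_le_mul_of_nonneg_left h2 (by positivity)
        have h4 : (8:ℝ) ^ (j - i) * (8 * r (j+1)) = 8 ^ (j + 1 - i) * r (j+1) := by
          rw [show j + 1 - i = (j - i) + 1 by omega, pow_succ]; ring
        exact (h1.trans h3).trans_eq h4
    have huni : ∀ i j, i < m → m ≤ j → j + 1 ≤ n → r i ≤ 8 ^ n * r j := by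
      intro i j hi hj hj1
      refine (hchain i j (by omega) hj1).trans ?_
      have : (8:ℝ) ^ (j - i) ≤ 8 ^ n := pow_le_pow_right₀ (by norm_num) (by omega)
      exact mul_le_mul_of_nonneg_right this (hrpos j hj1).le
    -- telescoping
    have htel : ∀ M, M ≤ n → a M = a 0 * ∏ k ∈ Finset.range M, r k := by
      intro M
      induction M with
      | zero => simp
      | succ M IH =>
        intro hM
        rw [Finset.prod_range_succ, ← mul_assoc, ← IH (by omega), hr_def]
        have := hposall M (by omega)
        field_simp
    have hP : a m = a 0 * ∏ k ∈ Finset.range m, r k := htel m (by omega)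
    have hQ : a n = a m * ∏ k ∈ Finset.Ico m n, r k := by
      have h1 := htel n le_rfl
      rw [← Finset.prod_range_mul_prod_Ico r (by omega : m ≤ n), ← mul_assoc, ← hP] at h1
      exact h1
    set P := ∏ k ∈ Finset.range m, r k with hPdef
    set Q := ∏ k ∈ Finset.Ico m n, r k with hQdef
    have hPpos : 0 < P := Finset.prod_pos fun k hk => by
      rw [Finset.mem_range] at hk; exact hrpos k (by omega)
    have hQpos : 0 < Q := Finset.prod_pos fun k hk => by
      rw [Finset.mem_Ico] at hk; exact hrpos k (by omega)
    have ha0 := hposall 0 (by omega)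
    have ham := hposall m (by omega)
    have han := hposall n le_rfl
    have hkey : P ^ (n - m) ≤ 8 ^ (n * (m * (n - m))) * Q ^ m := by
      have hle : ∏ p ∈ Finset.range m ×ˢ Finset.Ico m n, r p.1 ≤
          ∏ p ∈ Finset.range m ×ˢ Finset.Ico m n, ((8:ℝ) ^ n * r p.2) := by
        refine Finset.prod_le_prod (fun p hp => ?_) (fun p hp => ?_)
        · rw [Finset.mem_product, Finset.mem_range, Finset.mem_Ico] at hp
          exact (hrpos p.1 (by omega)).le
        · rw [Finset.mem_product, Finset.mem_range, Finset.mem_Ico] at hp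
          exact huni p.1 p.2 hp.1 hp.2.1 (by omega)
      have e1 : ∏ p ∈ Finset.range m ×ˢ Finset.Ico m n, r p.1 = P ^ (n - m) := by
        rw [Finset.prod_product' (f := fun x _ => r x)]
        simp only [Finset.prod_const, Nat.card_Ico]
        rw [Finset.prod_pow]
      have e2 : ∏ p ∈ Finset.range m ×ˢ Finset.Ico m n, ((8:ℝ) ^ n * r p.2) =
          8 ^ (n * (m * (n - m))) * Q ^ m := by
        rw [Finset.prod_product' (f := fun _ y => (8:ℝ) ^ n * r y)]
        have inner : ∏ y ∈ Finset.Ico m n, ((8:ℝ) ^ n * r y) = (8:ℝ) ^ (n * (n - m)) * Q := by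
          rw [Finset.prod_mul_distrib, Finset.prod_const, Nat.card_Ico, ← pow_mul]
        rw [inner]
        simp only [Finset.prod_const, Finset.card_range]
        rw [mul_pow, ← pow_mul, show n * (n - m) * m = n * (m * (n - m)) from by ring]
      rw [e1, e2] at hle
      exact hle
    have hmain : a m ^ n ≤ 8 ^ (n * (m * (n - m))) * (a 0 ^ (n - m) * a n ^ m) := by
      have h0 : a m ^ n = (a 0 ^ (n - m) * P ^ (n - m)) * a m ^ m := by
        rw [← mul_pow, ← hP, ← pow_add]
        congr 1; omega
      rw [h0]
      calc (a 0 ^ (n - m) * P ^ (n - m)) * a m ^ m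
          ≤ (a 0 ^ (n - m) * (8 ^ (n * (m * (n - m))) * Q ^ m)) * a m ^ m := by
            apply mul_le_mul_of_nonneg_right
              (mul_le_mul_of_nonneg_left hkey (by positivity)) (by positivity)
        _ = 8 ^ (n * (m * (n - m))) * (a 0 ^ (n - m) * (a m * Q) ^ m) := by
            rw [mul_pow]; ring
        _ = _ := by rw [← hQ]
    set X := ε ^ (n - m) * a n with hXdef
    set Y := ε ^ (-(m : ℤ)) * (8 : ℝ) ^ (n ^ 4) * a 0 with hYdef
    have hXpos : 0 < X := by
      have := zpow_pos hε (-(m:ℤ)); positivity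
    have hYpos : 0 < Y := by
      have := zpow_pos hε (-(m:ℤ)); positivity
    have hcancel : (ε ^ (n - m)) ^ m * (ε ^ (-(m : ℤ))) ^ (n - m) = 1 := by
      rw [← zpow_natCast ε (n - m), ← zpow_natCast (ε ^ ((n - m : ℕ) : ℤ)) m,
        ← zpow_natCast (ε ^ (-(m : ℤ))) (n - m), ← zpow_mul, ← zpow_mul,
        ← zpow_add₀ hε.ne']
      rw [show ((n - m : ℕ) : ℤ) * (m : ℤ) + (-(m : ℤ)) * ((n - m : ℕ) : ℤ) = 0 by ring]
      exact zpow_zero ε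
    have hXYm : X ^ m * Y ^ (n - m) = (8:ℝ) ^ (n ^ 4 * (n - m)) * (a 0 ^ (n - m) * a n ^ m) := by
      have expand : X ^ m * Y ^ (n - m) =
          ((ε ^ (n - m)) ^ m * (ε ^ (-(m : ℤ))) ^ (n - m)) *
            (((8:ℝ) ^ (n ^ 4)) ^ (n - m) * (a 0 ^ (n - m) * a n ^ m)) := by
        rw [hXdef, hYdef, mul_pow, mul_pow, mul_pow]; ring
      rw [expand, hcancel, one_mul, ← pow_mul]
    have hexp : n * (m * (n - m)) ≤ n ^ 4 * (n - m) := by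
      have h1 : n * m ≤ n ^ 4 := by
        calc n * m ≤ n * n := Nat.mul_le_mul_left _ (by omega)
          _ = n ^ 2 := (sq n).symm
          _ ≤ n ^ 2 * n ^ 2 := Nat.le_mul_of_pos_right _ (by positivity)
          _ = n ^ 4 := by ring
      calc n * (m * (n - m)) = (n * m) * (n - m) := by ring
        _ ≤ n ^ 4 * (n - m) := Nat.mul_le_mul_right _ h1
    have hXY : a m ^ n ≤ (X + Y) ^ n := by
      calc a m ^ n ≤ 8 ^ (n * (m * (n - m))) * (a 0 ^ (n - m) * a n ^ m) := hmain
        _ ≤ 8 ^ (n ^ 4 * (n - m)) * (a 0 ^ (n - m) * a n ^ m) := by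
            apply mul_le_mul_of_nonneg_right _ (by positivity)
            exact pow_le_pow_right₀ (by norm_num) hexp
        _ = X ^ m * Y ^ (n - m) := hXYm.symm
        _ ≤ (X + Y) ^ m * (X + Y) ^ (n - m) := by
            apply mul_le_mul (pow_le_pow_left₀ hXpos.le (by linarith) m)
              (pow_le_pow_left₀ hYpos.le (by linarith) (n - m)) (by positivity) (by positivity)
        _ = (X + Y) ^ n := by rw [← pow_add]; congr 1; omega
    exact le_of_pow_le_pow_left₀ (by omega) (by positivity) hXY
  · push_neg at hposall
    obtain ⟨k0, hk0n, hk0⟩ := hposall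
    have hk0z : a k0 = 0 := le_antisymm hk0 (ha k0)
    have hup : ∀ j, k0 ≤ j → j ≤ n → a j = 0 := by
      intro j hj
      induction j, hj using Nat.le_induction with
      | base => intro _; exact hk0z
      | succ j hj IH => intro hjn; exact hzero j (by omega) (IH (by omega))
    have han : a n = 0 := hup n hk0n le_rfl
    have hdown : ∀ d, d ≤ n - m → a (n - d) = 0 := by
      intro d
      induction d with
      | zero => intro _; simpa using han
      | succ d IH =>
        intro hd
        have hIH := IH (by omega)
        have hk1 : n - d = (n - (d + 1)) + 1 := by omega
        refine aux_zero (ha _) (ha (n - (d + 1) - 1)) fun t ht => ?_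
        have h2 := hrec (n - (d + 1)) (by omega) (by omega) t ht
        rw [← hk1, hIH] at h2
        simpa using h2
    have hamz : a m = 0 := by
      have := hdown (n - m) le_rfl
      rwa [show n - (n - m) = m by omega] at this
    rw [hamz]
    have h1 : 0 < ε ^ (-(m:ℤ)) := zpow_pos hε _
    have := ha n
    have := ha 0
    positivity

lemma hasDerivAt_orbit {U : ℝ → E →L[ℝ] E} {A : E →ₗ.[ℝ] E}
    (hUA : IsometryGroupGenerator U A) {f g : E} (hfg : InGraph A f g) (x : ℝ) :
    HasDerivAt (fun t => U t f) (U x g) x := by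
  obtain ⟨hf, hAf⟩ := hfg
  rw [hasDerivAt_iff_tendsto_slope]
  have key : ∀ t : ℝ, slope (fun s => U s f) x t = U x ((t - x)⁻¹ • (U (t - x) f - f)) := by
    intro t
    have h1 : U t f = U x (U (t - x) f) := by
      have := hUA.map_add x (t - x)
      rw [add_sub_cancel] at this
      rw [this]; rfl
    rw [slope_def_module, h1, map_smul, map_sub]
  rw [tendsto_congr key]
  have h2 : Tendsto (fun t : ℝ => t - x) (𝓝[≠] x) (𝓝[≠] (0 : ℝ)) := by
    rw [tendsto_nhdsWithin_iff]
    constructor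
    · have : Tendsto (fun t : ℝ => t - x) (𝓝 x) (𝓝 (x - x)) :=
        (continuous_id.sub continuous_const).tendsto x
      rw [sub_self] at this
      exact this.mono_left nhdsWithin_le_nhds
    · filter_upwards [self_mem_nhdsWithin] with t ht
      exact sub_ne_zero_of_ne ht
  have h3 := (hUA.generator_spec f hf).comp h2
  rw [hAf] at h3
  exact (((U x).continuous.tendsto g).comp h3 : _)

lemma orbit_dist {U : ℝ → E →L[ℝ] E} {A : E →ₗ.[ℝ] E}
    (hUA : IsometryGroupGenerator U A) {g h : E} (hgh : InGraph A g h) (t : ℝ) :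
    ‖U t g - g‖ ≤ ‖h‖ * |t| := by
  have := Convex.norm_image_sub_le_of_norm_hasDerivWithin_le
    (f := fun s => U s g) (f' := fun s => U s h) (C := ‖h‖) (s := Set.univ)
    (fun x _ => (hasDerivAt_orbit hUA hgh x).hasDerivWithinAt)
    (fun x _ => le_of_eq (hUA.isometry x h)) convex_univ (Set.mem_univ 0) (Set.mem_univ t)
  simp only [hUA.map_zero, ContinuousLinearMap.id_apply] at this
  simpa using this

lemma core_ineq {U : ℝ → E →L[ℝ] E} {A : E →ₗ.[ℝ] E}
    (hUA : IsometryGroupGenerator U A) {f g h : E} (hfg : InGraph A f g)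
    (hgh : InGraph A g h) {t : ℝ} (ht : 0 < t) : ‖g‖ ≤ t * ‖h‖ + 2 / t * ‖f‖ := by
  have hF : ∀ s : ℝ, HasDerivAt (fun u : ℝ => U u f - u • g) (U s g - g) s := by
    intro s
    have h1 := hasDerivAt_orbit hUA hfg s
    have h2 : HasDerivAt (fun u : ℝ => u • g) g s := by
      simpa using (hasDerivAt_id s).smul_const g
    exact h1.sub h2
  have hMVT := Convex.norm_image_sub_le_of_norm_hasDerivWithin_le
    (f := fun u : ℝ => U u f - u • g) (f' := fun s => U s g - g) (C := ‖h‖ * t)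
    (s := Set.Icc 0 t)
    (fun x _ => (hF x).hasDerivWithinAt)
    (fun x hx => by
      refine (orbit_dist hUA hgh x).trans ?_
      have : |x| ≤ t := by
        rw [abs_le]; exact ⟨by linarith [hx.1], hx.2⟩
      nlinarith [norm_nonneg h])
    (convex_Icc 0 t) (Set.mem_Icc.2 ⟨le_refl 0, ht.le⟩) (Set.mem_Icc.2 ⟨ht.le, le_refl t⟩)
  simp only [hUA.map_zero, zero_smul, sub_zero, ContinuousLinearMap.id_apply] at hMVT
  have htg : ‖t • g‖ ≤ 2 * ‖f‖ + ‖h‖ * t * t := by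
    have e1 : t • g = (U t f - f) - (U t f - t • g - f) := by abel
    rw [e1]
    refine (norm_sub_le _ _).trans ?_
    have e2 : ‖U t f - f‖ ≤ 2 * ‖f‖ := by
      refine (norm_sub_le _ _).trans ?_
      rw [hUA.isometry]; ring_nf; linarith
    have e3 : ‖U t f - t • g - f‖ ≤ ‖h‖ * t * t := by
      calc ‖U t f - t • g - f‖ ≤ ‖h‖ * t * ‖t - 0‖ := by
            simpa using hMVT
        _ = ‖h‖ * t * t := by rw [show (t:ℝ) - 0 = t by ring, Real.norm_eq_abs, abs_of_pos ht]
    linarith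
  rw [norm_smul, Real.norm_eq_abs, abs_of_pos ht] at htg
  have hr : t * (t * ‖h‖ + 2 / t * ‖f‖) = 2 * ‖f‖ + ‖h‖ * t * t := by
    field_simp; ring
  exact le_of_mul_le_mul_left (by rw [hr]; exact htg) ht

lemma inGraph_unique {A : E →ₗ.[ℝ] E} {f g g' : E}
    (h1 : InGraph A f g) (h2 : InGraph A f g') : g = g' := by
  obtain ⟨hf, e1⟩ := h1
  obtain ⟨hf', e2⟩ := h2
  rw [← e1, ← e2]

lemma inGraph_zero {A : E →ₗ.[ℝ] E} {g : E} (h : InGraph A 0 g) : g = 0 := by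
  obtain ⟨h0, e⟩ := h
  rw [← e, show (⟨0, h0⟩ : A.domain) = 0 from Subtype.ext rfl, A.map_zero]

lemma powGraph_chain {A : E →ₗ.[ℝ] E} : ∀ {N : ℕ} {f g : E}, PowGraph A N f g →
    ∃ c : ℕ → E, c 0 = f ∧ c N = g ∧ ∀ k < N, InGraph A (c k) (c (k + 1)) := by
  intro N
  induction N with
  | zero =>
    intro f g h
    exact ⟨fun _ => f, rfl, h.symm ▸ rfl, by omega⟩
  | succ N IH =>
    intro f g h
    obtain ⟨h', hin, hpg⟩ := h
    obtain ⟨c', hc0, hcN, hstep⟩ := IH hpg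
    refine ⟨fun k => if k = 0 then f else c' (k - 1), rfl, by simpa using hcN, ?_⟩
    intro k hk
    match k with
    | 0 => simpa [hc0] using hin
    | (k + 1) => simpa using hstep k (by omega)

lemma powGraph_of_chain {A : E →ₗ.[ℝ] E} : ∀ (N : ℕ) (c : ℕ → E),
    (∀ k < N, InGraph A (c k) (c (k + 1))) → PowGraph A N (c 0) (c N) := by
  intro N
  induction N with
  | zero => intro c _; rfl
  | succ N IH =>
    intro c hc
    exact ⟨c 1, hc 0 (by omega), IH (fun k => c (k + 1)) (fun k hk => hc (k + 1) (by omega))⟩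

lemma powGraph_unique {A : E →ₗ.[ℝ] E} : ∀ (N : ℕ) (f g g' : E),
    PowGraph A N f g → PowGraph A N f g' → g = g' := by
  intro N
  induction N with
  | zero => intro f g g' h1 h2; rw [h1, h2]
  | succ N IH =>
    intro f g g' h1 h2
    obtain ⟨h, hin, hpg⟩ := h1
    obtain ⟨h', hin', hpg'⟩ := h2
    rw [inGraph_unique hin hin'] at hpg
    exact IH _ _ _ hpg hpg'

theorem interpolation_inequality_for_generator
    (U : ℝ → E →L[ℝ] E) (A : E →ₗ.[ℝ] E) (hUA : IsometryGroupGenerator U A) :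
    ∀ n : ℕ, 2 ≤ n → ∃ C : ℝ, 0 < C ∧
      ∀ ε : ℝ, 0 < ε → ∀ m : ℕ, 1 ≤ m → m ≤ n - 1 →
        ∀ f gm gn : E, PowGraph A m f gm → PowGraph A n f gn →
          ‖gm‖ ≤ ε ^ (n - m) * ‖gn‖ + ε ^ (-(m : ℤ)) * C * ‖f‖ := by
  intro n hn
  refine ⟨(8 : ℝ) ^ (n ^ 4), by positivity, ?_⟩
  intro ε hε m hm1 hmn f gm gn hpm hpn
  obtain ⟨c, hc0, hcn, hstep⟩ := powGraph_chain hpn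
  have hm' : m + 1 ≤ n := by omega
  have hgm : gm = c m := by
    have h1 : PowGraph A m (c 0) (c m) :=
      powGraph_of_chain m c (fun k hk => hstep k (by omega))
    rw [hc0] at h1
    exact powGraph_unique m f gm (c m) hpm h1
  have key := lemmaR n hn (fun k => ‖c k‖) (fun k => norm_nonneg _)
    (fun k hk1 hk2 t ht => by
      have hfg := hstep (k - 1) (by omega)
      rw [show k - 1 + 1 = k by omega] at hfg
      exact core_ineq hUA hfg (hstep k (by omega)) ht)
    (fun k hk hak => by
      have hck : c k = 0 := norm_eq_zero.mp hak
      have h2 := hstep k hk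
      rw [hck] at h2
      simpa [norm_eq_zero] using inGraph_zero h2)
    ε hε m hm1 hm'
  rw [hgm, ← hc0, ← hcn]
  exact key
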